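/- Let n ≥ 3 be an integer and let a, b be real numbers satisfying b > (n−2)/(n−1) and a > ((n−2)b − (n−3)) / ((n−1)b − (n−2)). Then P^(n)(a,b) > 0, where P^(n)(a,b) denotes the determinant of the n×n tridiagonal matrix with diagonal (a, 2, …, 2, b), sub- and super-diagonal entries −1, and all other entries 0. -/

import Mathlib

/-- `Pdet m a b` is the determinant of the `m × m` tridiagonal matrix with
diagonal `(a, 2, 2, …, 2, b)` (first diagonal entry `a`, last diagonal entry `b`,
all other diagonal entries `2`), sub- and super-diagonal entries `-1`,
and all remaining entries `0`. -/
def Pdet (m : ℕ) (a b : ℝ) : ℝ :=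
  (Matrix.of fun i j : Fin m =>
    if i = j then (if i.val = 0 then a else if i.val = m - 1 then b else 2)
    else if i.val + 1 = j.val ∨ j.val + 1 = i.val then -1 else 0).det

open Matrix

/-- Generic two-step expansion for matrices whose first row and first column
vanish beyond the first two entries. -/
lemma det_tri_step (m : ℕ) (M : Matrix (Fin (m+2)) (Fin (m+2)) ℝ)
    (h0 : ∀ j : Fin m, M 0 j.succ.succ = 0)
    (h1 : ∀ i : Fin m, M i.succ.succ 0 = 0) :
    M.det = M 0 0 * (M.submatrix Fin.succ Fin.succ).det
      - M 0 1 * M 1 0 * (Matrix.of fun i j : Fin m => M i.succ.succ j.succ.succ).det := by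
  rw [Matrix.det_succ_row_zero, Fin.sum_univ_succ, Fin.sum_univ_succ]
  have hz : ∀ j : Fin m,
      (-1:ℝ) ^ ((j.succ.succ : Fin (m+2)) : ℕ) * M 0 j.succ.succ *
        (M.submatrix Fin.succ (Fin.succAbove j.succ.succ)).det = 0 := by
    intro j; rw [h0]; ring
  rw [Finset.sum_congr rfl (fun j _ => hz j), Finset.sum_const_zero]
  have hsub : (M.submatrix Fin.succ (Fin.succAbove 1)).det
      = M 1 0 * (Matrix.of fun i j : Fin m => M i.succ.succ j.succ.succ).det := by
    rw [Matrix.det_succ_column_zero, Fin.sum_univ_succ]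
    have hz2 : ∀ i : Fin m,
        (-1:ℝ) ^ ((i.succ : Fin (m+1)) : ℕ) *
          (M.submatrix Fin.succ (Fin.succAbove 1)) i.succ 0 *
          ((M.submatrix Fin.succ (Fin.succAbove 1)).submatrix (Fin.succAbove i.succ) Fin.succ).det = 0 := by
      intro i
      have : (M.submatrix Fin.succ (Fin.succAbove 1)) i.succ 0 = 0 := by
        simp [Matrix.submatrix_apply, Fin.succAbove, Fin.lt_def, h1]
      rw [this]; ring
    rw [Finset.sum_congr rfl (fun i _ => hz2 i), Finset.sum_const_zero]
    have e1 : (M.submatrix Fin.succ (Fin.succAbove 1)) 0 0 = M 1 0 := by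
      simp [Matrix.submatrix_apply, Fin.succAbove, Fin.lt_def]
    have e2 : ((M.submatrix Fin.succ (Fin.succAbove 1)).submatrix (Fin.succAbove 0) Fin.succ)
        = (Matrix.of fun i j : Fin m => M i.succ.succ j.succ.succ) := by
      ext i j
      simp [Matrix.submatrix_apply, Fin.succAbove, Fin.lt_def]
    rw [e1, e2]
    simp
  simp only [Fin.succ_zero_eq_one, Fin.succAbove_zero, Fin.val_zero, Fin.val_one,
    pow_zero, pow_one, one_mul, neg_one_mul, add_zero]
  rw [hsub]
  ring

def Dmat (m : ℕ) (b : ℝ) : ℝ :=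
  (Matrix.of fun i j : Fin m =>
    if i = j then (if i.val = m - 1 then b else 2)
    else if i.val + 1 = j.val ∨ j.val + 1 = i.val then -1 else 0).det

lemma Dmat_zero (b : ℝ) : Dmat 0 b = 1 := by
  simp [Dmat, Matrix.det_fin_zero]

lemma Dmat_one (b : ℝ) : Dmat 1 b = b := by
  simp [Dmat, Matrix.det_fin_one]

lemma Dmat_rec (m : ℕ) (b : ℝ) : Dmat (m+2) b = 2 * Dmat (m+1) b - Dmat m b := by
  unfold Dmat
  set M := (Matrix.of fun i j : Fin (m+2) =>
    if i = j then (if i.val = (m+2) - 1 then b else 2)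
    else if i.val + 1 = j.val ∨ j.val + 1 = i.val then -1 else 0) with hM
  have h0 : ∀ j : Fin m, M 0 j.succ.succ = 0 := by
    intro j
    simp only [hM, Matrix.of_apply, Fin.ext_iff, Fin.val_succ, Fin.val_zero]
    clear hM; split_ifs <;> norm_num at *
  have h1 : ∀ i : Fin m, M i.succ.succ 0 = 0 := by
    intro i
    simp only [hM, Matrix.of_apply, Fin.ext_iff, Fin.val_succ, Fin.val_zero]
    split_ifs <;> simp_all <;> omega
  rw [det_tri_step m M h0 h1]
  have h00 : M 0 0 = 2 := by
    rw [hM, Matrix.of_apply, if_pos rfl, if_neg (by rw [Fin.val_zero]; omega)]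
  have h01 : M 0 1 = -1 := by
    rw [hM]; simp [Fin.ext_iff]
  have h10 : M 1 0 = -1 := by
    rw [hM]; simp [Fin.ext_iff]
  have hs1 : (M.submatrix Fin.succ Fin.succ)
      = (Matrix.of fun i j : Fin (m+1) =>
        if i = j then (if i.val = (m+1) - 1 then b else 2)
        else if i.val + 1 = j.val ∨ j.val + 1 = i.val then -1 else 0) := by
    ext i j
    have hi := i.isLt; have hj := j.isLt
    simp only [hM, Matrix.submatrix_apply, Matrix.of_apply, Fin.ext_iff, Fin.val_succ,
      show (m+2)-1 = m+1 from rfl, show (m+1)-1 = m from rfl]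
    split_ifs <;> first | rfl | omega | (exfalso; omega) | exact absurd rfl (by assumption) | simp_all
  have hs2 : (Matrix.of fun i j : Fin m => M i.succ.succ j.succ.succ)
      = (Matrix.of fun i j : Fin m =>
        if i = j then (if i.val = m - 1 then b else 2)
        else if i.val + 1 = j.val ∨ j.val + 1 = i.val then -1 else 0) := by
    ext i j
    have hi := i.isLt; have hj := j.isLt
    simp only [hM, Matrix.of_apply, Fin.ext_iff, Fin.val_succ,
      show (m+2)-1 = m+1 from rfl]
    split_ifs <;> first | rfl | omega | (exfalso; omega) | exact absurd rfl (by assumption) | simp_all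
  rw [h00, h01, h10, hs1, hs2]
  ring

lemma Dmat_eq (m : ℕ) (b : ℝ) : Dmat m b = m * (b - 1) + 1 := by
  induction m using Nat.twoStepInduction with
  | zero => simp [Dmat_zero]
  | one => rw [Dmat_one]; push_cast; ring
  | more k ih1 ih2 =>
    rw [Dmat_rec, ih1, ih2]
    push_cast
    ring

lemma Pdet_rec (m : ℕ) (a b : ℝ) :
    Pdet (m+2) a b = a * Dmat (m+1) b - Dmat m b := by
  unfold Pdet Dmat
  set M := (Matrix.of fun i j : Fin (m+2) =>
    if i = j then (if i.val = 0 then a else if i.val = (m+2) - 1 then b else 2)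
    else if i.val + 1 = j.val ∨ j.val + 1 = i.val then -1 else 0) with hM
  have h0 : ∀ j : Fin m, M 0 j.succ.succ = 0 := by
    intro j
    simp only [hM, Matrix.of_apply, Fin.ext_iff, Fin.val_succ, Fin.val_zero]
    split_ifs <;> simp_all <;> omega
  have h1 : ∀ i : Fin m, M i.succ.succ 0 = 0 := by
    intro i
    simp only [hM, Matrix.of_apply, Fin.ext_iff, Fin.val_succ, Fin.val_zero]
    split_ifs <;> simp_all <;> omega
  rw [det_tri_step m M h0 h1]
  have h00 : M 0 0 = a := by
    rw [hM, Matrix.of_apply, if_pos rfl, if_pos (by rw [Fin.val_zero])]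
  have h01 : M 0 1 = -1 := by
    rw [hM, Matrix.of_apply, if_neg (by simp [Fin.ext_iff]), if_pos (by simp)]
  have h10 : M 1 0 = -1 := by
    rw [hM, Matrix.of_apply, if_neg (by simp [Fin.ext_iff]), if_pos (by simp)]
  have hs1 : (M.submatrix Fin.succ Fin.succ)
      = (Matrix.of fun i j : Fin (m+1) =>
        if i = j then (if i.val = (m+1) - 1 then b else 2)
        else if i.val + 1 = j.val ∨ j.val + 1 = i.val then -1 else 0) := by
    ext i j
    have hi := i.isLt; have hj := j.isLt
    simp only [hM, Matrix.submatrix_apply, Matrix.of_apply, Fin.ext_iff, Fin.val_succ,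
      show (m+2)-1 = m+1 from rfl, show (m+1)-1 = m from rfl]
    split_ifs <;> first | rfl | omega | (exfalso; omega) | exact absurd rfl (by assumption) | simp_all
  have hs2 : (Matrix.of fun i j : Fin m => M i.succ.succ j.succ.succ)
      = (Matrix.of fun i j : Fin m =>
        if i = j then (if i.val = m - 1 then b else 2)
        else if i.val + 1 = j.val ∨ j.val + 1 = i.val then -1 else 0) := by
    ext i j
    have hi := i.isLt; have hj := j.isLt
    simp only [hM, Matrix.of_apply, Fin.ext_iff, Fin.val_succ,
      show (m+2)-1 = m+1 from rfl]
    split_ifs <;> first | rfl | omega | (exfalso; omega) | exact absurd rfl (by assumption) | simp_all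
  rw [h00, h01, h10, hs1, hs2]
  ring

lemma Pdet_eq (m : ℕ) (a b : ℝ) :
    Pdet (m+2) a b = a * (((m:ℝ)+1) * (b-1) + 1) - ((m:ℝ) * (b-1) + 1) := by
  rw [Pdet_rec, Dmat_eq, Dmat_eq]
  push_cast
  ring

theorem stmt9 (n : ℕ) (hn : 3 ≤ n) (a b : ℝ)
    (hb : b > ((n : ℝ) - 2) / ((n : ℝ) - 1))
    (ha : a > (((n : ℝ) - 2) * b - ((n : ℝ) - 3)) / (((n : ℝ) - 1) * b - ((n : ℝ) - 2))) :
    Pdet n a b > 0 := by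
  obtain ⟨k, rfl⟩ : ∃ k, n = k + 2 := ⟨n - 2, by omega⟩
  rw [Pdet_eq]
  set K := (k : ℝ) with hKdef
  have hc : ((k + 2 : ℕ) : ℝ) = K + 2 := by push_cast; ring
  rw [hc] at hb ha
  have hK : (0:ℝ) ≤ K := by positivity
  have hb' : K / (K + 1) < b := by
    rw [show K + 2 - 2 = K by ring, show K + 2 - 1 = K + 1 by ring] at hb
    exact hb
  have hd : 0 < (K + 1) * b - K := by
    have h1 : (0:ℝ) < K + 1 := by linarith
    have := (div_lt_iff₀ h1).mp hb'
    linarith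
  have ha' : (K * b - (K - 1)) / ((K + 1) * b - K) < a := by
    rw [show K + 2 - 2 = K by ring, show K + 2 - 1 = K + 1 by ring,
      show K + 2 - 3 = K - 1 by ring] at ha
    exact ha
  have h2 : K * b - (K - 1) < a * ((K + 1) * b - K) := (div_lt_iff₀ hd).mp ha'
  have e : a * ((K + 1) * (b - 1) + 1) - (K * (b - 1) + 1)
      = a * ((K + 1) * b - K) - (K * b - (K - 1)) := by ring
  linarith [h2, e.ge, e.le]
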